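/- Let M be a binary matroid with standard matrix representation A over GF(2), and let T ⊆ E(M). If y ∈ T, then deleting y from the splitting matroid equals splitting the deletion with respect to T \ {y}: (M_T) \ y = (M \ y)_{T \ {y}}. -/

import Mathlib

open scoped Classical

namespace PaperSplit

variable {α β : Type}

/-- `A` is a matrix representation (columns indexed by `α`, rows by `η`) of the
matroid `M` over `GF(2)`, with ground set `E`. -/
def RepresentsOn {η : Type} (A : α → η → ZMod 2) (E : Set α) (M : Matroid α) : Prop :=
  M.E = E ∧ ∀ I ⊆ E, (M.Indep I ↔ LinearIndependent (ZMod 2) (fun i : I => A i.1))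

/-- The columns of the matrix `A_T`: one extra row (indexed by `none`) is appended,
with entry `1` exactly in the columns of `T`. -/
noncomputable def splitCols {η : Type} (A : α → η → ZMod 2) (T : Set α) :
    α → Option η → ZMod 2 :=
  fun a o => Option.elim o (if a ∈ T then 1 else 0) (A a)

/-- `MT` is the splitting matroid of `M` with respect to `T`. -/
def IsSplitting (M : Matroid α) (T : Set α) (MT : Matroid α) : Prop :=
  ∃ (η : Type) (A : α → η → ZMod 2),
    RepresentsOn A M.E M ∧ RepresentsOn (splitCols A T) M.E MT

/-- `M` is a binary matroid. -/
def IsBinary (M : Matroid α) : Prop :=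
  ∃ (η : Type) (A : α → η → ZMod 2), RepresentsOn A M.E M

/-- Deletion of a set of elements. -/
def del (M : Matroid α) (D : Set α) : Matroid α := M.restrict (M.E \ D)

/-- Contraction of a set of elements. -/
def con (M : Matroid α) (C : Set α) : Matroid α := (del M.dual C).dual

/-- `N` is a minor of `M`. -/
def IsMinorOf (N M : Matroid α) : Prop := ∃ X Y, Disjoint X Y ∧ N = con (del M X) Y

/-- `C` is a circuit (minimal dependent set) of `M`. -/
def circuit (M : Matroid α) (C : Set α) : Prop :=
  C ⊆ M.E ∧ ¬ M.Indep C ∧ ∀ D ⊂ C, M.Indep D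

/-- `C` is a cocircuit of `M`, i.e. a circuit of the dual. -/
def cocircuit (M : Matroid α) (C : Set α) : Prop := circuit M.dual C

def isLoop (M : Matroid α) (e : α) : Prop := circuit M {e}

def isColoop (M : Matroid α) (e : α) : Prop := isLoop M.dual e

/-- Matroid isomorphism. -/
def MIso (M : Matroid α) (N : Matroid β) : Prop :=
  ∃ e : M.E ≃ N.E, ∀ I : Set M.E,
    M.Indep (Subtype.val '' I) ↔ N.Indep (Subtype.val '' (e '' I))

/-- A graphic matroid: one represented over `GF(2)` by a vertex–edge incidence
matrix (each column is zero or the sum of two distinct standard basis vectors). -/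
def IsGraphic (M : Matroid α) : Prop :=
  ∃ (V : Type) (A : α → V → ZMod 2), RepresentsOn A M.E M ∧
    ∀ a ∈ M.E, A a = 0 ∨ ∃ u v : V, u ≠ v ∧
      A a = fun w => (if w = u then (1 : ZMod 2) else 0) + (if w = v then 1 else 0)

def IsCographic (M : Matroid α) : Prop := IsGraphic M.dual

/-- A multigraph with vertex type `V` and edge type `E`. -/
structure Multigraph (V E : Type) where
  ends : E → Sym2 V

/-- The mod-2 vertex–edge incidence matrix of a multigraph. -/
noncomputable def Multigraph.inc {V E : Type} (G : Multigraph V E) : E → V → ZMod 2 :=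
  fun e v => if G.ends e = Sym2.mk v v then 0 else if v ∈ G.ends e then 1 else 0

/-- `M` is the cycle matroid of the multigraph `G`. -/
def IsCycleMatroidOf {V E : Type} (G : Multigraph V E) (M : Matroid E) : Prop :=
  RepresentsOn G.inc Set.univ M

def Multigraph.Adj {V E : Type} (G : Multigraph V E) (u v : V) : Prop :=
  ∃ e, G.ends e = Sym2.mk u v

def Multigraph.Connected {V E : Type} (G : Multigraph V E) : Prop :=
  Nonempty V ∧ ∀ u v : V, Relation.ReflTransGen G.Adj u v

noncomputable def Multigraph.degree {V E : Type} (G : Multigraph V E) (v : V) : ℕ :=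
  Nat.card {e | v ∈ G.ends e ∧ ¬ (G.ends e).IsDiag} +
    2 * Nat.card {e | G.ends e = Sym2.mk v v}

def Multigraph.Eulerian {V E : Type} (G : Multigraph V E) : Prop :=
  G.Connected ∧ ∀ v, Even (G.degree v)

/-- The Fano matroid `F₇`: represented over `GF(2)` by the seven distinct
nonzero vectors of `GF(2)³`. -/
def IsFano (M : Matroid (Fin 7)) : Prop :=
  ∃ A : Fin 7 → Fin 3 → ZMod 2, RepresentsOn A Set.univ M ∧
    Function.Injective A ∧ ∀ i, A i ≠ 0

/-- The complete graph `K₅` as a multigraph. -/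
def K5 : Multigraph (Fin 5) {p : Sym2 (Fin 5) // ¬ p.IsDiag} := ⟨fun e => e.1⟩

/-- The complete bipartite graph `K₃,₃` as a multigraph. -/
def K33 : Multigraph (Fin 3 ⊕ Fin 3) (Fin 3 × Fin 3) :=
  ⟨fun e => Sym2.mk (Sum.inl e.1) (Sum.inr e.2)⟩


/-- For `y ∈ T`, `(M_T) \ y = (M \ y)_{T \ {y}}`. -/
theorem splitting_delete_in_T {α η : Type} (M MT N NT : Matroid α)
    (A : α → η → ZMod 2) (T : Set α) (y : α)
    (hM : RepresentsOn A Set.univ M) (hT : T ⊆ M.E) (hy : y ∈ T)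
    (hMT : RepresentsOn (splitCols A T) Set.univ MT)
    (hN : N = del M {y})
    (hNT : RepresentsOn (splitCols A (T \ {y})) (Set.univ \ {y}) NT) :
    del MT {y} = NT := by
  have hE : (del MT {y}).E = NT.E := by
    simp [del, hMT.1, hNT.1]
  refine Matroid.ext_indep hE ?_
  intro I hI
  have hIE : I ⊆ Set.univ \ {y} := by
    rw [hE, hNT.1] at hI; exact hI
  have hIy : ∀ i : I, i.1 ≠ y := fun i => (hIE i.2).2
  have hcols : (fun i : I => splitCols A T i.1) =
      (fun i : I => splitCols A (T \ {y}) i.1) := by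
    funext i
    funext o
    cases o <;> simp [splitCols, Set.mem_diff, hIy i]
  rw [show del MT {y} = MT.restrict (MT.E \ {y}) from rfl, Matroid.restrict_indep_iff]
  rw [hMT.2 I (Set.subset_univ I), hNT.2 I hIE, hcols, hMT.1]
  constructor
  · rintro ⟨h, -⟩; exact h
  · intro h; exact ⟨h, hIE⟩

end PaperSplit
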